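/- For any two distinct vertices u, v of G, the sup-norm distance ‖x_u − x_v‖_∞ equals 2 if u and v are adjacent in G, and equals 1 if u and v are not adjacent in G. -/

import Mathlib

open Finset
open scoped InnerProductSpace

/-- For any two distinct vertices `u, v` of `G`, the sup-norm distance
`‖x_u − x_v‖_∞` equals `2` if `u` and `v` are adjacent in `G`, and `1` otherwise. -/
theorem linf_distance_formula
    {V E : Type*} [Fintype V] [DecidableEq V] [Fintype E] [DecidableEq E]
    (G : SimpleGraph V) [DecidableRel G.Adj]
    (hiso : ∀ v : V, ∃ u : V, G.Adj v u)
    (tail head : E → V)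
    (hadj : ∀ e : E, G.Adj (tail e) (head e))
    (hinj : ∀ e₁ e₂ : E,
      (s(tail e₁, head e₁) : Sym2 V) = s(tail e₂, head e₂) → e₁ = e₂)
    (hsurj : ∀ u v : V, G.Adj u v → ∃ e : E, (s(tail e, head e) : Sym2 V) = s(u, v))
    (x : V → E → ℝ)
    (hx : ∀ (v : V) (e : E),
      x v e = if tail e = v then 1 else if head e = v then -1 else 0)
    (u v : V) (huv : u ≠ v) :
    ‖x u - x v‖ = if G.Adj u v then 2 else 1 := by
  have habs : ∀ (w : V) (e : E), |x w e| ≤ 1 := by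
    intro w e
    rw [hx]
    split_ifs <;> norm_num
  split_ifs with h
  · -- adjacent case
    obtain ⟨e, he⟩ := hsurj u v h
    rw [Sym2.eq_iff] at he
    have hval : |x u e - x v e| = 2 := by
      rcases he with ⟨h1, h2⟩ | ⟨h1, h2⟩ <;>
        · rw [hx, hx, h1, h2]
          have := G.ne_of_adj h
          simp [huv, huv.symm, this, this.symm]
          norm_num
    apply le_antisymm
    · rw [show (2 : ℝ) = ((2 : NNReal) : ℝ) by norm_num]
      apply pi_norm_le_iff_of_nonneg (by norm_num) |>.2
      intro e'
      have h1 := habs u e'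
      have h2 := habs v e'
      rw [Pi.sub_apply, Real.norm_eq_abs]
      push_cast
      calc |x u e' - x v e'| ≤ |x u e'| + |x v e'| := abs_sub _ _
        _ ≤ 2 := by linarith
    · calc (2 : ℝ) = ‖(x u - x v) e‖ := by rw [Pi.sub_apply, Real.norm_eq_abs, hval]
        _ ≤ ‖x u - x v‖ := norm_le_pi_norm _ e
  · -- non-adjacent case
    have hnot : ∀ e : E, ¬(tail e = u ∧ head e = v) ∧ ¬(tail e = v ∧ head e = u) := by
      intro e
      constructor <;> rintro ⟨h1, h2⟩
      · exact h (h1 ▸ h2 ▸ hadj e)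
      · exact h (G.adj_symm (h1 ▸ h2 ▸ hadj e))
    obtain ⟨w, hw⟩ := hiso u
    obtain ⟨e, he⟩ := hsurj u w hw
    rw [Sym2.eq_iff] at he
    have hvw : v ≠ w := by rintro rfl; exact h hw
    have hval : |x u e - x v e| = 1 := by
      rcases he with ⟨h1, h2⟩ | ⟨h1, h2⟩ <;>
        · rw [hx, hx, h1, h2]
          have hwu := G.ne_of_adj hw
          simp [huv, huv.symm, hvw, hvw.symm, hwu, hwu.symm]
    apply le_antisymm
    · rw [show (1 : ℝ) = ((1 : NNReal) : ℝ) by norm_num]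
      apply pi_norm_le_iff_of_nonneg (by norm_num) |>.2
      intro e'
      rw [Pi.sub_apply, Real.norm_eq_abs]
      push_cast
      have hne := hnot e'
      have hth : tail e' ≠ head e' := G.ne_of_adj (hadj e')
      by_cases t1 : tail e' = u
      · have hv1 : head e' ≠ v := fun q => hne.1 ⟨t1, q⟩
        have hv2 : tail e' ≠ v := t1 ▸ huv
        rw [hx, hx, if_pos t1, if_neg hv2, if_neg hv1]
        norm_num
      · by_cases t2 : head e' = u
        · have hv2 : tail e' ≠ v := fun q => hne.2 ⟨q, t2⟩
          have hv1 : head e' ≠ v := t2 ▸ huv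
          rw [hx, hx, if_neg t1, if_pos t2, if_neg hv2, if_neg hv1]
          norm_num
        · rw [hx, hx, if_neg t1, if_neg t2]
          have := habs v e'
          rw [hx] at this
          calc |(0 : ℝ) - _| = |_| := by rw [zero_sub, abs_neg]
            _ ≤ 1 := this
    · calc (1 : ℝ) = ‖(x u - x v) e‖ := by rw [Pi.sub_apply, Real.norm_eq_abs, hval]
        _ ≤ ‖x u - x v‖ := norm_le_pi_norm _ e
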